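/- Let A and B be v×v real symmetric positive semidefinite matrices with equal column spaces, C(A) = C(B). Then the Moore–Penrose pseudoinverse of their product satisfies the reverse-order law: (A B)⁺ = B⁺ A⁺. -/

import Mathlib

open Matrix

/-- The column space of a real matrix. -/
def colSpace {m n : ℕ} (A : Matrix (Fin m) (Fin n) ℝ) : Submodule ℝ (Fin m → ℝ) :=
  LinearMap.range A.mulVecLin

/-- `B` is the Moore–Penrose pseudoinverse of `A`. -/
def IsMPInv {m n : ℕ} (A : Matrix (Fin m) (Fin n) ℝ) (B : Matrix (Fin n) (Fin m) ℝ) : Prop :=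
  A * B * A = A ∧ B * A * B = B ∧ (A * B)ᵀ = A * B ∧ (B * A)ᵀ = B * A

/-- Uniqueness of the Moore–Penrose pseudoinverse. -/
lemma mp_unique {m n : ℕ} {M : Matrix (Fin m) (Fin n) ℝ} {X Y : Matrix (Fin n) (Fin m) ℝ}
    (hX : IsMPInv M X) (hY : IsMPInv M Y) : X = Y := by
  obtain ⟨hX1, hX2, hX3, hX4⟩ := hX
  obtain ⟨hY1, hY2, hY3, hY4⟩ := hY
  have hMX : M * X = M * Y := by
    calc M * X = (M * Y * M) * X := by rw [hY1]
      _ = (M * Y) * (M * X) := by simp only [Matrix.mul_assoc]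
      _ = (M * Y)ᵀ * (M * X)ᵀ := by rw [hY3, hX3]
      _ = ((M * X) * (M * Y))ᵀ := by rw [transpose_mul (M * X) (M * Y)]
      _ = ((M * X * M) * Y)ᵀ := by simp only [Matrix.mul_assoc]
      _ = (M * Y)ᵀ := by rw [hX1]
      _ = M * Y := hY3
  have hXM : X * M = Y * M := by
    calc X * M = X * (M * Y * M) := by rw [hY1]
      _ = (X * M) * (Y * M) := by simp only [Matrix.mul_assoc]
      _ = (X * M)ᵀ * (Y * M)ᵀ := by rw [hX4, hY4]
      _ = ((Y * M) * (X * M))ᵀ := by rw [transpose_mul (Y * M) (X * M)]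
      _ = (Y * (M * X * M))ᵀ := by simp only [Matrix.mul_assoc]
      _ = (Y * M)ᵀ := by rw [hX1]
      _ = Y * M := hY4
  calc X = X * M * X := hX2.symm
    _ = X * (M * Y) := by rw [Matrix.mul_assoc, hMX]
    _ = (Y * M) * Y := by rw [← Matrix.mul_assoc, hXM]
    _ = Y := hY2

/-- Matrices that agree on all vectors are equal. -/
lemma ext_mulVec {m n : ℕ} {M N : Matrix (Fin m) (Fin n) ℝ}
    (h : ∀ x, M *ᵥ x = N *ᵥ x) : M = N := by
  ext i j
  have := congrFun (h (Pi.single j 1)) i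
  simpa using this

/-- For symmetric `A`, the pseudoinverse is symmetric. -/
lemma mp_symm {n : ℕ} {A Ap : Matrix (Fin n) (Fin n) ℝ} (hAs : Aᵀ = A)
    (hAp : IsMPInv A Ap) : Apᵀ = Ap := by
  obtain ⟨h1, h2, h3, h4⟩ := hAp
  have hApA : Ap * A = A * Apᵀ := by
    calc Ap * A = (Ap * A)ᵀ := h4.symm
      _ = Aᵀ * Apᵀ := transpose_mul _ _
      _ = A * Apᵀ := by rw [hAs]
  have hAAp : A * Ap = Apᵀ * A := by
    calc A * Ap = (A * Ap)ᵀ := h3.symm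
      _ = Apᵀ * Aᵀ := transpose_mul _ _
      _ = Apᵀ * A := by rw [hAs]
  have h1t := congrArg transpose h1
  simp only [transpose_mul, hAs] at h1t
  have h2t := congrArg transpose h2
  simp only [transpose_mul, hAs] at h2t
  refine mp_unique ⟨?_, ?_, ?_, ?_⟩ ⟨h1, h2, h3, h4⟩
  · rw [Matrix.mul_assoc]; exact h1t
  · rw [Matrix.mul_assoc]; exact h2t
  · rw [transpose_mul, transpose_transpose, hAs]; exact hApA
  · rw [transpose_mul, transpose_transpose, hAs]; exact hAAp

theorem stmt12 (v : ℕ) (A B : Matrix (Fin v) (Fin v) ℝ)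
    (hA : A.PosSemidef) (hB : B.PosSemidef) (hcol : colSpace A = colSpace B)
    (Ap Bp ABp : Matrix (Fin v) (Fin v) ℝ)
    (hAp : IsMPInv A Ap) (hBp : IsMPInv B Bp) (hABp : IsMPInv (A * B) ABp) :
    ABp = Bp * Ap := by
  have hAs : Aᵀ = A := by simpa [Matrix.IsSymm] using hA.1
  have hBs : Bᵀ = B := by simpa [Matrix.IsSymm] using hB.1
  have hApS : Apᵀ = Ap := mp_symm hAs hAp
  have hBpS : Bpᵀ = Bp := mp_symm hBs hBp
  -- commutation
  have commA : Ap * A = A * Ap := by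
    calc Ap * A = (Ap * A)ᵀ := hAp.2.2.2.symm
      _ = Aᵀ * Apᵀ := transpose_mul _ _
      _ = A * Ap := by rw [hAs, hApS]
  -- projectors fix the common column space
  have hPfix : ∀ x ∈ colSpace A, (A * Ap) *ᵥ x = x := by
    rintro x ⟨y, rfl⟩
    rw [Matrix.mulVecLin_apply, mulVec_mulVec, Matrix.mul_assoc, ← Matrix.mul_assoc, hAp.1]
  have hQfix : ∀ x ∈ colSpace B, (B * Bp) *ᵥ x = x := by
    rintro x ⟨y, rfl⟩
    rw [Matrix.mulVecLin_apply, mulVec_mulVec, Matrix.mul_assoc, ← Matrix.mul_assoc, hBp.1]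
  have hPQ : (A * Ap) * (B * Bp) = B * Bp := by
    refine ext_mulVec fun x => ?_
    rw [← mulVec_mulVec]
    exact hPfix _ (by rw [hcol]; exact ⟨Bp *ᵥ x, by rw [Matrix.mulVecLin_apply, mulVec_mulVec]⟩)
  have hQP : (B * Bp) * (A * Ap) = A * Ap := by
    refine ext_mulVec fun x => ?_
    rw [← mulVec_mulVec]
    exact hQfix _ (by rw [← hcol]; exact ⟨Ap *ᵥ x, by rw [Matrix.mulVecLin_apply, mulVec_mulVec]⟩)
  have hPeqQ : A * Ap = B * Bp := by
    calc A * Ap = (B * Bp) * (A * Ap) := hQP.symm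
      _ = (B * Bp)ᵀ * (A * Ap)ᵀ := by rw [hAp.2.2.1, hBp.2.2.1]
      _ = ((A * Ap) * (B * Bp))ᵀ := by rw [transpose_mul (A * Ap) (B * Bp)]
      _ = (B * Bp)ᵀ := by rw [hPQ]
      _ = B * Bp := hBp.2.2.1
  -- key products
  have key3 : A * B * (Bp * Ap) = A * Ap := by
    calc A * B * (Bp * Ap) = A * (B * Bp) * Ap := by simp only [Matrix.mul_assoc]
      _ = A * (Ap * A) * Ap := by rw [commA, hPeqQ]
      _ = (A * Ap * A) * Ap := by simp only [Matrix.mul_assoc]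
      _ = A * Ap := by rw [hAp.1]
  have key4 : Bp * Ap * (A * B) = Bp * B := by
    calc Bp * Ap * (A * B) = Bp * (Ap * A) * B := by simp only [Matrix.mul_assoc]
      _ = Bp * (B * Bp) * B := by rw [commA, hPeqQ]
      _ = (Bp * B * Bp) * B := by simp only [Matrix.mul_assoc]
      _ = Bp * B := by rw [hBp.2.1]
  -- verify the four Penrose conditions for Bp * Ap
  refine mp_unique hABp ⟨?_, ?_, ?_, ?_⟩
  · calc A * B * (Bp * Ap) * (A * B) = (A * B) * ((Bp * Ap) * (A * B)) := by
          rw [Matrix.mul_assoc (A * B)]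
      _ = (A * B) * (Bp * B) := by rw [key4]
      _ = A * (B * Bp * B) := by simp only [Matrix.mul_assoc]
      _ = A * B := by rw [hBp.1]
  · calc Bp * Ap * (A * B) * (Bp * Ap) = (Bp * B) * (Bp * Ap) := by rw [key4]
      _ = (Bp * B * Bp) * Ap := by simp only [Matrix.mul_assoc]
      _ = Bp * Ap := by rw [hBp.2.1]
  · rw [key3]; exact hAp.2.2.1
  · rw [key4]; exact hBp.2.2.2
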